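/- arXiv:1710.06719 — 2 statements merged into one kernel-verified Lean document; each statement's English description precedes it below -/
import Mathlib

section
/- For every vertex v of a finite graph G and every r ∈ ℕ, the spectral radius of the ball G(v,r) is at least the spectral radius of the unraveled ball G̃(v,r): λ_1(G(v,r)) ≥ λ_1(G̃(v,r)). -/
open Classical Real Filter SimpleGraph

/-- The multiset of adjacency eigenvalues of a finite simple graph, indexed by vertices. -/
noncomputable def adjEigs {V : Type*} [Fintype V] (G : SimpleGraph V) : V → ℝ :=
  Matrix.IsHermitian.eigenvalues (A := G.adjMatrix ℝ)
    (by rw [Matrix.IsHermitian, Matrix.conjTranspose_eq_transpose_of_trivial]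
        exact SimpleGraph.isSymm_adjMatrix G)

/-- The spectral radius (largest adjacency eigenvalue) of a finite simple graph. -/
noncomputable def lam1 {V : Type*} [Fintype V] (G : SimpleGraph V) : ℝ := ⨆ v, adjEigs G v

/-- The second largest adjacency eigenvalue (with multiplicity) of a finite simple graph. -/
noncomputable def lam2 {V : Type*} [Fintype V] (G : SimpleGraph V) : ℝ :=
  ⨆ p : {p : V × V // p.1 ≠ p.2}, min (adjEigs G p.1.1) (adjEigs G p.1.2)

/-- A non-backtracking walk of length `≤ r` starting at `v`: recorded as its list of
vertices (of length `≤ r + 1`, starting with `v`). -/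
structure NBWalk {V : Type*} (G : SimpleGraph V) (v : V) (r : ℕ) where
  toList : List V
  ne_nil : toList ≠ []
  head_eq : toList.head ne_nil = v
  length_le : toList.length ≤ r + 1
  chain : toList.Chain' G.Adj
  nonback : ∀ i : ℕ, ∀ h : i + 2 < toList.length,
    toList.get ⟨i, by omega⟩ ≠ toList.get ⟨i + 2, h⟩

/-- The unraveled ball of radius `r` centered at `v`: vertices are the non-backtracking
walks of length `≤ r` starting at `v`, two walks adjacent iff one is a one-step
extension of the other. -/
def unravBall {V : Type*} (G : SimpleGraph V) (v : V) (r : ℕ) : SimpleGraph (NBWalk G v r) :=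
  SimpleGraph.fromRel (fun w w' => ∃ x, w'.toList = w.toList ++ [x])

noncomputable instance {V : Type*} [Fintype V] {G : SimpleGraph V} {v : V} {r : ℕ} :
    Fintype (NBWalk G v r) :=
  haveI : Finite {l : List V // l.length ≤ r + 1} :=
    (List.finite_length_le V (r + 1)).to_subtype
  haveI : Finite (NBWalk G v r) := Finite.of_injective
    (fun w => (⟨w.toList, w.length_le⟩ : {l : List V // l.length ≤ r + 1}))
    (by rintro ⟨⟩ ⟨⟩ h; simp_all)
  Fintype.ofFinite _

/-- The root of the unraveled ball: the length-`0` walk `(v)`. -/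
def nbRoot {V : Type*} (G : SimpleGraph V) (v : V) (r : ℕ) : NBWalk G v r :=
  ⟨[v], by simp, rfl, by simp, List.isChain_singleton _, by intro i h; simp at h⟩

/-- The terminal vertex of a non-backtracking walk. -/
def NBWalk.term {V : Type*} {G : SimpleGraph V} {v : V} {r : ℕ} (w : NBWalk G v r) : V :=
  w.toList.getLast w.ne_nil


section Helpers
variable {V : Type*} {G : SimpleGraph V} {v : V} {r : ℕ}

lemma NBWalk.ext' {w w' : NBWalk G v r} (h : w.toList = w'.toList) : w = w' := by
  cases w; cases w'; simp_all

lemma getLast_concat'' (l : List V) (x : V) :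
    (l ++ [x]).getLast (by simp) = x := by
  exact List.getLast_concat

lemma term_of_ext {w w' : NBWalk G v r} {x : V} (h : w'.toList = w.toList ++ [x]) :
    w'.term = x := by
  unfold NBWalk.term
  rw [show w'.toList.getLast w'.ne_nil = (w.toList ++ [x]).getLast (by simp) by congr 1]
  exact getLast_concat'' _ _

lemma parent_of_ext {w w' : NBWalk G v r} {x : V} (h : w'.toList = w.toList ++ [x]) :
    w.toList = w'.toList.dropLast := by
  rw [h, List.dropLast_concat]

lemma no_aba (w : NBWalk G v r) (l : List V) (a b : V) : w.toList ≠ l ++ [a, b, a] := by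
  intro h
  have hlen : w.toList.length = l.length + 3 := by rw [h]; simp
  have := w.nonback l.length (by omega)
  apply this
  have h1 : w.toList.get ⟨l.length, by omega⟩ = a := by
    simp only [List.get_eq_getElem, h]
    rw [List.getElem_append_right (le_refl l.length)]
    simp
  have h2 : w.toList.get ⟨l.length + 2, by omega⟩ = a := by
    simp only [List.get_eq_getElem, h]
    rw [List.getElem_append_right (by omega)]
    simp
  rw [h1, h2]

lemma unravBall_adj {w w' : NBWalk G v r} :
    (unravBall G v r).Adj w w' ↔
      (∃ x, w'.toList = w.toList ++ [x]) ∨ (∃ x, w.toList = w'.toList ++ [x]) := by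
  constructor
  · rintro ⟨-, h⟩; exact h
  · intro h
    refine ⟨?_, h⟩
    rintro rfl
    rcases h with ⟨x, hx⟩ | ⟨x, hx⟩ <;>
    · have := congrArg List.length hx; simp at this

lemma adj_term {w w' : NBWalk G v r} (h : (unravBall G v r).Adj w w') :
    G.Adj w.term w'.term := by
  have key : ∀ (u u' : NBWalk G v r) (x : V), u'.toList = u.toList ++ [x] →
      G.Adj u.term u'.term := by
    intro u u' x hx
    rw [term_of_ext hx]
    have hc := u'.chain
    rw [hx] at hc
    replace hc := List.isChain_append.mp hc
    exact hc.2.2 u.term (by rw [NBWalk.term, List.getLast?_eq_getLast u.ne_nil]; simp) x rfl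
  rcases unravBall_adj.mp h with ⟨x, hx⟩ | ⟨x, hx⟩
  · exact key _ _ _ hx
  · exact (key _ _ _ hx).symm

lemma uniq_nbr {w w₁ w₂ : NBWalk G v r} {y : V}
    (h₁ : (unravBall G v r).Adj w w₁) (h₂ : (unravBall G v r).Adj w w₂)
    (t₁ : w₁.term = y) (t₂ : w₂.term = y) : w₁ = w₂ := by
  have mixed : ∀ (u₁ u₂ : NBWalk G v r) (x₁ x₂ : V), u₁.toList = w.toList ++ [x₁] →
      w.toList = u₂.toList ++ [x₂] → u₁.term = y → u₂.term = y → False := by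
    intro u₁ u₂ x₁ x₂ e₁ e₂ s₁ s₂
    have hx₁ : x₁ = y := by rw [← term_of_ext e₁, s₁]
    have hx₂ : x₂ = w.term := (term_of_ext e₂).symm
    have hu₂ : u₂.toList = u₂.toList.dropLast ++ [y] := by
      conv_lhs => rw [← List.dropLast_append_getLast u₂.ne_nil]
      rw [show u₂.toList.getLast u₂.ne_nil = y from s₂]
    apply no_aba u₁ u₂.toList.dropLast y x₂
    rw [e₁, e₂, hu₂, hx₁]
    simp
  rcases unravBall_adj.mp h₁ with ⟨x₁, e₁⟩ | ⟨x₁, e₁⟩ <;>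
    rcases unravBall_adj.mp h₂ with ⟨x₂, e₂⟩ | ⟨x₂, e₂⟩
  · apply NBWalk.ext'
    rw [e₁, e₂, show x₁ = y from by rw [← term_of_ext e₁, t₁],
      show x₂ = y from by rw [← term_of_ext e₂, t₂]]
  · exact absurd (mixed w₁ w₂ x₁ x₂ e₁ e₂ t₁ t₂) (by simp)
  · exact absurd (mixed w₂ w₁ x₂ x₁ e₂ e₁ t₂ t₁) (by simp)
  · apply NBWalk.ext'
    rw [parent_of_ext e₁, parent_of_ext e₂]

lemma walk_of_chain (G : SimpleGraph V) : ∀ (l : List V) (hne : l ≠ []) (_ : l.Chain' G.Adj),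
    ∃ p : G.Walk (l.head hne) (l.getLast hne), p.length + 1 = l.length
  | [a], _, _ => ⟨SimpleGraph.Walk.nil, rfl⟩
  | a :: b :: t, _, hc => by
    have hadj : G.Adj a b := (List.isChain_cons_cons.mp hc).1
    obtain ⟨p, hp⟩ := walk_of_chain G (b :: t) (by simp) (List.isChain_cons_cons.mp hc).2
    refine ⟨(SimpleGraph.Walk.cons hadj p).copy rfl (List.getLast_cons (by simp)).symm, ?_⟩
    change p.length + 1 + 1 = _
    simp at hp ⊢
    omega

lemma term_mem (w : NBWalk G v r) : w.term ∈ {u | G.Reachable v u ∧ G.dist v u ≤ r} := by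
  obtain ⟨p, hp⟩ := walk_of_chain G w.toList w.ne_nil w.chain
  let p' : G.Walk v w.term := p.copy w.head_eq rfl
  constructor
  · exact ⟨p'⟩
  · have h1 : G.dist v w.term ≤ p'.length := SimpleGraph.dist_le p'
    have h2 : p'.length = p.length := SimpleGraph.Walk.length_copy _ _ _
    have := w.length_le
    omega

end Helpers

section MatrixHelpers
open Matrix

lemma rayleigh_le {n : Type*} [Fintype n] [DecidableEq n] {A : Matrix n n ℝ}
    (hA : A.IsHermitian) (x : n → ℝ) :
    x ⬝ᵥ (A *ᵥ x) ≤ (⨆ i, hA.eigenvalues i) * (x ⬝ᵥ x) := by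
  cases isEmpty_or_nonempty n with
  | inl h => simp [dotProduct, ciSup_of_empty]
  | inr h =>
    set U : Matrix n n ℝ := (hA.eigenvectorUnitary : Matrix n n ℝ) with hU
    set y : n → ℝ := star U *ᵥ x with hy
    have hUU : U * star U = 1 := (Matrix.mem_unitaryGroup_iff).mp (hA.eigenvectorUnitary).2
    have key : ∀ z : n → ℝ, x ⬝ᵥ (U *ᵥ z) = y ⬝ᵥ z := by
      intro z
      rw [Matrix.dotProduct_mulVec, hy]
      congr 1
      rw [Matrix.star_eq_conjTranspose, Matrix.conjTranspose_eq_transpose_of_trivial,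
        Matrix.mulVec_transpose]
    have h1 : x ⬝ᵥ (A *ᵥ x) = ∑ i, hA.eigenvalues i * y i ^ 2 := by
      conv_lhs => rw [hA.spectral_theorem, Unitary.conjStarAlgAut_apply]
      rw [← Matrix.mulVec_mulVec, ← Matrix.mulVec_mulVec, key]
      simp only [dotProduct, Matrix.mulVec_diagonal, ← hy, sq]
      exact Finset.sum_congr rfl (fun i _ => by simp [RCLike.ofReal, Function.comp]; ring)
    have h2 : x ⬝ᵥ x = ∑ i, y i ^ 2 := by
      have : x ⬝ᵥ x = x ⬝ᵥ ((U * star U) *ᵥ x) := by rw [hUU, Matrix.one_mulVec]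
      rw [this, ← Matrix.mulVec_mulVec, key]
      simp [dotProduct, sq]; rfl
    have hbdd : BddAbove (Set.range hA.eigenvalues) := Set.Finite.bddAbove (Set.finite_range _)
    rw [h1, h2, Finset.mul_sum]
    apply Finset.sum_le_sum
    intro i _
    exact mul_le_mul_of_nonneg_right (le_ciSup hbdd i) (sq_nonneg _)

lemma exists_eigvec {n : Type*} [Fintype n] [DecidableEq n] [Nonempty n] {A : Matrix n n ℝ}
    (hA : A.IsHermitian) :
    ∃ x : n → ℝ, 0 < x ⬝ᵥ x ∧ A *ᵥ x = (⨆ i, hA.eigenvalues i) • x := by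
  obtain ⟨i₀, hi₀⟩ := Finite.exists_max hA.eigenvalues
  have hsup : (⨆ i, hA.eigenvalues i) = hA.eigenvalues i₀ :=
    le_antisymm (ciSup_le hi₀) (le_ciSup (Set.Finite.bddAbove (Set.finite_range _)) i₀)
  refine ⟨⇑(hA.eigenvectorBasis i₀), ?_, by rw [hsup]; exact hA.mulVec_eigenvectorBasis i₀⟩
  have hne : (⇑(hA.eigenvectorBasis i₀) : n → ℝ) ≠ 0 := by
    intro h
    have := hA.eigenvectorBasis.orthonormal.1 i₀
    rw [show (hA.eigenvectorBasis i₀) = 0 from PiLp.ext (fun i => congrFun h i)] at this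
    simp at this
  obtain ⟨j, hj⟩ := Function.ne_iff.mp hne
  have hj' : (⇑(hA.eigenvectorBasis i₀) j : ℝ) ≠ 0 := hj
  have : (0:ℝ) < ∑ i, (⇑(hA.eigenvectorBasis i₀) i)^2 := by
    apply Finset.sum_pos' (fun i _ => sq_nonneg _)
    exact ⟨j, Finset.mem_univ j, by rw [← sq_abs]; exact pow_pos (abs_pos.mpr hj') 2⟩
  simpa [dotProduct, sq] using this

lemma adjMatrix_isHermitian {n : Type*} [Fintype n] (G' : SimpleGraph n)
    [DecidableRel G'.Adj] : (G'.adjMatrix ℝ).IsHermitian := by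
  rw [Matrix.IsHermitian, Matrix.conjTranspose_eq_transpose_of_trivial]
  exact SimpleGraph.isSymm_adjMatrix G'

lemma dot_le_lam1 {n : Type*} [Fintype n] (G' : SimpleGraph n) (x : n → ℝ) :
    x ⬝ᵥ (G'.adjMatrix ℝ *ᵥ x) ≤ lam1 G' * (x ⬝ᵥ x) :=
  rayleigh_le (adjMatrix_isHermitian G') x

lemma exists_eigvec_graph {n : Type*} [Fintype n] [Nonempty n] (G' : SimpleGraph n) :
    ∃ x : n → ℝ, 0 < x ⬝ᵥ x ∧ G'.adjMatrix ℝ *ᵥ x = lam1 G' • x :=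
  exists_eigvec (adjMatrix_isHermitian G')

lemma dot_adj {n : Type*} [Fintype n] (G' : SimpleGraph n) (x : n → ℝ) :
    x ⬝ᵥ (G'.adjMatrix ℝ *ᵥ x)
      = ∑ p ∈ Finset.univ.filter (fun p : n × n => G'.Adj p.1 p.2), x p.1 * x p.2 := by
  rw [Finset.sum_filter, ← Finset.univ_product_univ, Finset.sum_product]
  simp only [dotProduct, Matrix.mulVec, SimpleGraph.adjMatrix_apply, Finset.mul_sum]
  refine Finset.sum_congr rfl fun i _ => Finset.sum_congr rfl fun j _ => ?_
  by_cases h : G'.Adj i j <;> simp [h, dotProduct, mul_comm]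

end MatrixHelpers

section MainProof
open Matrix

/-- The spectral radius of the ball `G(v, r)` is at least the spectral radius of the
unraveled ball `G̃(v, r)`. -/
theorem lam1_ball_ge_lam1_unravBall {V : Type*} [Fintype V] (G : SimpleGraph V)
    (v : V) (r : ℕ) :
    lam1 (unravBall G v r) ≤ lam1 (G.induce {u | G.Reachable v u ∧ G.dist v u ≤ r}) := by
  classical
  set S : Set V := {u | G.Reachable v u ∧ G.dist v u ≤ r} with hS
  haveI : Nonempty (NBWalk G v r) := ⟨nbRoot G v r⟩
  obtain ⟨f, hf, heig⟩ := exists_eigvec_graph (unravBall G v r)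
  set F : NBWalk G v r → ℝ := fun w => |f w| with hFdef
  have hFnn : ∀ w, 0 ≤ F w := fun w => abs_nonneg _
  set tm : NBWalk G v r → S := fun w => ⟨w.term, term_mem w⟩ with htm
  set g : S → ℝ :=
    fun x => Real.sqrt (∑ w ∈ Finset.univ.filter (fun w => tm w = x), F w ^ 2) with hgdef
  have hgnn : ∀ x, 0 ≤ g x := fun x => Real.sqrt_nonneg _
  have hgsq : ∀ x, g x ^ 2 = ∑ w ∈ Finset.univ.filter (fun w => tm w = x), F w ^ 2 := fun x =>
    Real.sq_sqrt (Finset.sum_nonneg fun w _ => sq_nonneg _)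
  set PH := Finset.univ.filter
    (fun p : NBWalk G v r × NBWalk G v r => (unravBall G v r).Adj p.1 p.2) with hPH
  set PB := Finset.univ.filter (fun q : S × S => (G.induce S).Adj q.1 q.2) with hPB
  set φ : (NBWalk G v r × NBWalk G v r) → S × S := fun p => (tm p.1, tm p.2) with hφ
  have hindadj : ∀ a b : S, (G.induce S).Adj a b ↔ G.Adj a.1 b.1 := by
    intro a b; simp [SimpleGraph.comap]
  have hmaps : ∀ p ∈ PH, φ p ∈ PB := by
    intro p hp
    simp only [hPH, Finset.mem_filter, Finset.mem_univ, true_and] at hp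
    simp only [hPB, Finset.mem_filter, Finset.mem_univ, true_and, hφ]
    exact (hindadj _ _).mpr (adj_term hp)
  -- the key per-fiber bound
  have step_q : ∀ q ∈ PB,
      (∑ p ∈ PH.filter (fun p => φ p = q), F p.1 * F p.2) ≤ g q.1 * g q.2 := by
    intro q hq
    set s := PH.filter (fun p => φ p = q) with hs
    have hmem : ∀ p ∈ s, (unravBall G v r).Adj p.1 p.2 ∧ tm p.1 = q.1 ∧ tm p.2 = q.2 := by
      intro p hp
      simp only [hs, hPH, Finset.mem_filter, Finset.mem_univ, true_and, hφ] at hp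
      exact ⟨hp.1, congrArg Prod.fst hp.2, congrArg Prod.snd hp.2⟩
    have hinj1 : ∀ p ∈ s, ∀ p' ∈ s, p.1 = p'.1 → p = p' := by
      intro p hp p' hp' h
      obtain ⟨ha, ht1, ht2⟩ := hmem p hp
      obtain ⟨ha', ht1', ht2'⟩ := hmem p' hp'
      have := uniq_nbr (w := p.1) (w₁ := p.2) (w₂ := p'.2) ha (h ▸ ha')
        (congrArg Subtype.val ht2) (congrArg Subtype.val ht2')
      exact Prod.ext h this
    have hinj2 : ∀ p ∈ s, ∀ p' ∈ s, p.2 = p'.2 → p = p' := by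
      intro p hp p' hp' h
      obtain ⟨ha, ht1, ht2⟩ := hmem p hp
      obtain ⟨ha', ht1', ht2'⟩ := hmem p' hp'
      have := uniq_nbr (w := p.2) (w₁ := p.1) (w₂ := p'.1) ha.symm (h ▸ ha'.symm)
        (congrArg Subtype.val ht1) (congrArg Subtype.val ht1')
      exact Prod.ext this h
    have hsum1 : (∑ p ∈ s, F p.1 ^ 2) ≤ g q.1 ^ 2 := by
      rw [hgsq]
      calc ∑ p ∈ s, F p.1 ^ 2 = ∑ w ∈ s.image Prod.fst, F w ^ 2 :=
            (Finset.sum_image (f := fun w => F w ^ 2) hinj1).symm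
        _ ≤ _ := ?_
      apply Finset.sum_le_sum_of_subset_of_nonneg
      · intro w hw
        simp only [Finset.mem_image] at hw
        obtain ⟨p, hp, rfl⟩ := hw
        simp only [Finset.mem_filter, Finset.mem_univ, true_and]
        exact (hmem p hp).2.1
      · intros; positivity
    have hsum2 : (∑ p ∈ s, F p.2 ^ 2) ≤ g q.2 ^ 2 := by
      rw [hgsq]
      calc ∑ p ∈ s, F p.2 ^ 2 = ∑ w ∈ s.image Prod.snd, F w ^ 2 :=
            (Finset.sum_image (f := fun w => F w ^ 2) hinj2).symm
        _ ≤ _ := ?_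
      apply Finset.sum_le_sum_of_subset_of_nonneg
      · intro w hw
        simp only [Finset.mem_image] at hw
        obtain ⟨p, hp, rfl⟩ := hw
        simp only [Finset.mem_filter, Finset.mem_univ, true_and]
        exact (hmem p hp).2.2
      · intros; positivity
    have hcs := Finset.sum_mul_sq_le_sq_mul_sq s (fun p => F p.1) (fun p => F p.2)
    have lhs_nn : 0 ≤ ∑ p ∈ s, F p.1 * F p.2 :=
      Finset.sum_nonneg fun p _ => mul_nonneg (hFnn _) (hFnn _)
    nlinarith [mul_nonneg (hgnn q.1) (hgnn q.2), sq_nonneg (g q.1), sq_nonneg (g q.2),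
      Finset.sum_nonneg (fun p (_ : p ∈ s) => sq_nonneg (F p.1)),
      Finset.sum_nonneg (fun p (_ : p ∈ s) => sq_nonneg (F p.2))]
  -- assembling
  have hgg : g ⬝ᵥ g = f ⬝ᵥ f := by
    have hfib : ∑ x : S, ∑ w ∈ Finset.univ.filter (fun w => tm w = x), F w ^ 2
        = ∑ w : NBWalk G v r, F w ^ 2 :=
      Finset.sum_fiberwise_of_maps_to (fun w _ => Finset.mem_univ (tm w)) _
    calc g ⬝ᵥ g = ∑ x : S, g x ^ 2 := by
          simp [dotProduct, sq]
      _ = ∑ w : NBWalk G v r, F w ^ 2 := by rw [← hfib]; exact Finset.sum_congr rfl fun x _ => hgsq x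
      _ = f ⬝ᵥ f := by
          simp only [dotProduct, hFdef, sq_abs, sq]
          exact Finset.sum_congr rfl fun w _ => by rw [← sq, sq_abs, sq]
  have chain1 : lam1 (unravBall G v r) * (f ⬝ᵥ f) ≤ lam1 (G.induce S) * (f ⬝ᵥ f) := by
    calc lam1 (unravBall G v r) * (f ⬝ᵥ f)
        = f ⬝ᵥ ((unravBall G v r).adjMatrix ℝ *ᵥ f) := by
          rw [heig, dotProduct_smul]; ring_nf
      _ = ∑ p ∈ PH, f p.1 * f p.2 := dot_adj _ f
      _ ≤ ∑ p ∈ PH, F p.1 * F p.2 := by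
          apply Finset.sum_le_sum
          intro p _
          calc f p.1 * f p.2 ≤ |f p.1 * f p.2| := le_abs_self _
            _ = F p.1 * F p.2 := abs_mul _ _
      _ = ∑ q ∈ PB, ∑ p ∈ PH.filter (fun p => φ p = q), F p.1 * F p.2 :=
          (Finset.sum_fiberwise_of_maps_to hmaps _).symm
      _ ≤ ∑ q ∈ PB, g q.1 * g q.2 := Finset.sum_le_sum step_q
      _ = g ⬝ᵥ ((G.induce S).adjMatrix ℝ *ᵥ g) := (dot_adj _ g).symm
      _ ≤ lam1 (G.induce S) * (g ⬝ᵥ g) := dot_le_lam1 _ g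
      _ = lam1 (G.induce S) * (f ⬝ᵥ f) := by rw [hgg]
  exact le_of_mul_le_mul_right chain1 hf

end MainProof
end

section
/- For any finite graph G = (V,E) with minimum degree at least 2 and any r ∈ ℕ, there exists a vertex v ∈ V such that the spectral radius of the unraveled ball of radius r at v satisfies λ_1(G̃(v,r)) ≥ (1/|E|)·Σ_{u∈V} d(u)·√(d(u)−1) · cos(π/(r+2)). -/
open Classical Real Filter SimpleGraph

set_option linter.unusedSectionVars false
set_option maxHeartbeats 1000000

namespace NBWalk

variable {V : Type*} {G : SimpleGraph V} {v : V} {r : ℕ}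

theorem ext'_s11 {w w' : NBWalk G v r} (h : w.toList = w'.toList) : w = w' := by
  cases w; cases w'; simp_all

lemma length_pos (w : NBWalk G v r) : 0 < w.toList.length := List.length_pos_iff.2 w.ne_nil

lemma head_eq' (w : NBWalk G v r) : w.toList[0]'w.length_pos = v := by
  rw [List.getElem_zero w.length_pos]; exact w.head_eq

lemma term_eq_getElem (w : NBWalk G v r) :
    w.term = w.toList[w.toList.length - 1]'(by have := w.length_pos; omega) := by
  simp [NBWalk.term, List.getLast_eq_getElem]

/-- The condition that `x` is a legal next vertex for `w`. -/
def canExt (w : NBWalk G v r) (x : V) : Prop :=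
  G.Adj w.term x ∧ ∀ p ∈ w.toList.dropLast.getLast?, x ≠ p

/-- One-step extension of a non-backtracking walk (junk value `w` if illegal). -/
noncomputable def ext1 (w : NBWalk G v r) (x : V) : NBWalk G v r :=
  if h : w.toList.length ≤ r ∧ w.canExt x then
    { toList := w.toList ++ [x]
      ne_nil := by simp
      head_eq := by rw [List.head_append_left w.ne_nil]; exact w.head_eq
      length_le := by simp; omega
      chain := by
        refine List.isChain_append.2 ⟨w.chain, by simp, ?_⟩
        intro a ha b hb
        rw [List.getLast?_eq_getLast w.ne_nil] at ha
        simp only [Option.mem_some_iff] at ha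
        simp only [List.head?_cons, Option.mem_some_iff] at hb
        subst ha; subst hb
        exact h.2.1
      nonback := by
        intro i hi
        simp only [List.length_append, List.length_singleton] at hi
        simp only [List.get_eq_getElem]
        rcases lt_or_eq_of_le (by omega : i + 2 + 1 ≤ w.toList.length + 1) with hlt | heq
        · have h2 : i + 2 < w.toList.length := by omega
          rw [List.getElem_append_left (by omega), List.getElem_append_left h2]
          have := w.nonback i h2
          simpa using this
        · have h2 : i + 2 = w.toList.length := by omega
          have hxval : (w.toList ++ [x])[i + 2]'(by simp; omega) = x := by
            rw [List.getElem_append_right (by omega)]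
            simp [h2]
          rw [hxval, List.getElem_append_left (by omega)]
          have hlen2 : 2 ≤ w.toList.length := by omega
          have hpen : w.toList.dropLast.getLast? = some (w.toList[i]'(by omega)) := by
            rw [List.getLast?_eq_getLast (by
              intro hnil
              have := congrArg List.length hnil
              simp at this; omega)]
            congr 1
            rw [List.getLast_eq_getElem]
            rw [List.getElem_dropLast]
            congr 1
            simp; omega
          have := h.2.2 _ (by rw [hpen]; rfl)
          exact fun hc => this hc.symm }
  else w

lemma ext1_toList (w : NBWalk G v r) (x : V) (hr : w.toList.length ≤ r) (hx : w.canExt x) :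
    (w.ext1 x).toList = w.toList ++ [x] := by
  rw [ext1, dif_pos ⟨hr, hx⟩]

lemma ext1_length (w : NBWalk G v r) (x : V) (hr : w.toList.length ≤ r) (hx : w.canExt x) :
    (w.ext1 x).toList.length = w.toList.length + 1 := by
  rw [ext1_toList w x hr hx]; simp

lemma ext1_term (w : NBWalk G v r) (x : V) (hr : w.toList.length ≤ r) (hx : w.canExt x) :
    (w.ext1 x).term = x := by
  simp [NBWalk.term, ext1_toList w x hr hx]

lemma ext1_dropLast_getLast? (w : NBWalk G v r) (x : V) (hr : w.toList.length ≤ r)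
    (hx : w.canExt x) :
    (w.ext1 x).toList.dropLast.getLast? = some w.term := by
  rw [ext1_toList w x hr hx, List.dropLast_concat,
    List.getLast?_eq_getLast w.ne_nil]
  rfl

/-- The parent (walk with last step removed); junk value `w` for the root. -/
noncomputable def par (w : NBWalk G v r) : NBWalk G v r :=
  if h : 1 < w.toList.length then
    { toList := w.toList.dropLast
      ne_nil := by
        intro hnil
        have := congrArg List.length hnil
        simp at this; omega
      head_eq := by
        have h0 : 0 < w.toList.dropLast.length := by simp; omega
        rw [List.head_eq_getElem, List.getElem_dropLast, List.getElem_zero w.length_pos]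
        exact w.head_eq
      length_le := by have := w.length_le; simp; omega
      chain := w.chain.dropLast
      nonback := by
        intro i hi
        simp only [List.length_dropLast] at hi
        simp only [List.get_eq_getElem, List.getElem_dropLast]
        have := w.nonback i (by omega)
        simpa using this }
  else w

lemma par_toList (w : NBWalk G v r) (h : 1 < w.toList.length) :
    (w.par).toList = w.toList.dropLast := by
  rw [par, dif_pos h]

lemma toList_eq_par_append (w : NBWalk G v r) (h : 1 < w.toList.length) :
    w.toList = w.par.toList ++ [w.term] := by
  rw [par_toList w h]
  exact (List.dropLast_concat_getLast w.ne_nil).symm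

end NBWalk

section Finsets

variable {V : Type*} [Fintype V] {G : SimpleGraph V} {v : V} {r : ℕ}

/-- The finset of legal next vertices. -/
noncomputable def NBWalk.extF (w : NBWalk G v r) : Finset V := Finset.univ.filter w.canExt

/-- The finset of walks at level `k` (i.e. with `k` edges). -/
noncomputable def levelF (G : SimpleGraph V) (v : V) (r k : ℕ) : Finset (NBWalk G v r) :=
  Finset.univ.filter (fun w => w.toList.length = k + 1)

namespace NBWalk

lemma of_toList_append {w w' : NBWalk G v r} {x : V} (hw' : w'.toList = w.toList ++ [x]) :
    w.canExt x ∧ w'.term = x ∧ w.toList.length ≤ r := by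
  have hterm : w'.term = x := by
    simp [NBWalk.term, hw', List.getLast_append_singleton]
  have hlen : w'.toList.length = w.toList.length + 1 := by simp [hw']
  have hr : w.toList.length ≤ r := by have := w'.length_le; omega
  refine ⟨⟨?_, ?_⟩, hterm, hr⟩
  · have hc := w'.chain
    rw [hw'] at hc
    have := (List.isChain_append.1 hc).2.2
    exact this _ (by rw [List.getLast?_eq_getLast w.ne_nil]; rfl) _ rfl
  · intro p hp
    have hdne : w.toList.dropLast ≠ [] := by
      intro hnil
      rw [hnil] at hp
      simp at hp
    have hlen2 : 2 ≤ w.toList.length := by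
      have := List.length_pos_iff.2 hdne
      simp at this
      omega
    rw [List.getLast?_eq_getLast hdne] at hp
    simp only [Option.mem_some_iff] at hp
    subst hp
    have hnb := w'.nonback (w.toList.length - 2) (by omega)
    simp only [List.get_eq_getElem] at hnb
    have h1 : w'.toList[w.toList.length - 2]'(by omega) = w.toList.dropLast.getLast hdne := by
      rw [List.getElem_of_eq hw' (by omega), List.getElem_append_left (by omega),
        List.getLast_eq_getElem, List.getElem_dropLast]
      congr 1
      simp
      omega
    have h2 : w'.toList[w.toList.length - 2 + 2]'(by omega) = x := by
      rw [List.getElem_of_eq hw' (by omega), List.getElem_append_right (by omega)]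
      simp only [List.getElem_singleton]
    rw [h1, h2] at hnb
    exact hnb.symm

lemma sum_children (w : NBWalk G v r) (hr : w.toList.length ≤ r) (F : NBWalk G v r → ℝ) :
    ∑ w' ∈ Finset.univ.filter (fun w' : NBWalk G v r => ∃ x, w'.toList = w.toList ++ [x]), F w'
      = ∑ x ∈ w.extF, F (w.ext1 x) := by
  refine Finset.sum_nbij' (fun w' => w'.term) (fun x => w.ext1 x) ?_ ?_ ?_ ?_ ?_
  · intro w' hw'
    simp only [Finset.mem_filter, Finset.mem_univ, true_and] at hw'
    obtain ⟨x, hx⟩ := hw'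
    obtain ⟨hce, ht, -⟩ := of_toList_append hx
    rw [extF]
    simp only [Finset.mem_filter, Finset.mem_univ, true_and]
    rw [ht]
    exact hce
  · intro x hx
    simp only [extF, Finset.mem_filter, Finset.mem_univ, true_and] at hx
    simp only [Finset.mem_filter, Finset.mem_univ, true_and]
    exact ⟨x, w.ext1_toList x hr hx⟩
  · intro w' hw'
    simp only [Finset.mem_filter, Finset.mem_univ, true_and] at hw'
    obtain ⟨x, hx⟩ := hw'
    obtain ⟨hce, ht, -⟩ := of_toList_append hx
    apply NBWalk.ext'_s11
    show (w.ext1 w'.term).toList = w'.toList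
    rw [ht, w.ext1_toList x hr hce, hx]
  · intro x hx
    simp only [extF, Finset.mem_filter, Finset.mem_univ, true_and] at hx
    exact w.ext1_term x hr hx
  · intro w' hw'
    simp only [Finset.mem_filter, Finset.mem_univ, true_and] at hw'
    obtain ⟨x, hx⟩ := hw'
    obtain ⟨hce, ht, -⟩ := of_toList_append hx
    have : w.ext1 w'.term = w' := by
      apply NBWalk.ext'_s11
      rw [ht, w.ext1_toList x hr hce, hx]
    show F w' = F (w.ext1 w'.term)
    rw [this]

lemma no_children (w : NBWalk G v r) (hr : w.toList.length = r + 1) :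
    Finset.univ.filter (fun w' : NBWalk G v r => ∃ x, w'.toList = w.toList ++ [x]) = ∅ := by
  ext w'
  simp only [Finset.mem_filter, Finset.mem_univ, true_and, Finset.notMem_empty, iff_false]
  rintro ⟨x, hx⟩
  have := w'.length_le
  rw [hx] at this
  simp [hr] at this

end NBWalk

lemma levelF_zero : levelF G v r 0 = {nbRoot G v r} := by
  ext w
  simp only [levelF, Finset.mem_filter, Finset.mem_univ, true_and, Finset.mem_singleton]
  constructor
  · intro h
    obtain ⟨a, ha⟩ := List.length_eq_one_iff.1 h
    apply NBWalk.ext'_s11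
    have hav : a = v := by
      have h0 := w.head_eq'
      rw [List.getElem_of_eq ha w.length_pos] at h0
      simpa using h0
    show w.toList = [v]
    rw [ha, hav]
  · intro h; rw [h]; rfl

lemma sum_levelF_succ (k : ℕ) (hk : k + 1 ≤ r) (F : NBWalk G v r → ℝ) :
    ∑ w' ∈ levelF G v r (k + 1), F w'
      = ∑ w ∈ levelF G v r k, ∑ x ∈ w.extF, F (w.ext1 x) := by
  have hcover : levelF G v r (k + 1) = (levelF G v r k).biUnion
      (fun w => Finset.univ.filter
        (fun w' : NBWalk G v r => ∃ x, w'.toList = w.toList ++ [x])) := by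
    ext w'
    simp only [levelF, Finset.mem_filter, Finset.mem_univ, true_and, Finset.mem_biUnion]
    constructor
    · intro hlen
      refine ⟨w'.par, ?_, w'.term, w'.toList_eq_par_append (by omega)⟩
      rw [w'.par_toList (by omega)]
      simp [hlen]
    · rintro ⟨w, hw, x, hx⟩
      rw [hx]
      simp [hw]
  have hdisj : ∀ w₁ ∈ levelF G v r k, ∀ w₂ ∈ levelF G v r k, w₁ ≠ w₂ →
      Disjoint (Finset.univ.filter
          (fun w' : NBWalk G v r => ∃ x, w'.toList = w₁.toList ++ [x]))
        (Finset.univ.filter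
          (fun w' : NBWalk G v r => ∃ x, w'.toList = w₂.toList ++ [x])) := by
    intro w₁ _ w₂ _ hne
    rw [Finset.disjoint_left]
    intro w' h1 h2
    simp only [Finset.mem_filter, Finset.mem_univ, true_and] at h1 h2
    obtain ⟨x₁, hx₁⟩ := h1
    obtain ⟨x₂, hx₂⟩ := h2
    apply hne
    apply NBWalk.ext'_s11
    have := hx₁ ▸ hx₂.symm
    have := congrArg List.dropLast (hx₁.symm.trans hx₂)
    simpa using this
  rw [hcover, Finset.sum_biUnion hdisj]
  refine Finset.sum_congr rfl fun w hw => ?_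
  simp only [levelF, Finset.mem_filter, Finset.mem_univ, true_and] at hw
  exact w.sum_children (by omega) F

lemma sum_univ_levelF (F : NBWalk G v r → ℝ) :
    ∑ w, F w = ∑ k ∈ Finset.range (r + 1), ∑ w ∈ levelF G v r k, F w := by
  rw [← Finset.sum_fiberwise_of_maps_to
    (g := fun w : NBWalk G v r => w.toList.length - 1) (t := Finset.range (r + 1))
    (fun w _ => by have := w.length_le; have := w.length_pos; simp [Finset.mem_range]; omega)]
  refine Finset.sum_congr rfl fun k _ => ?_
  refine Finset.sum_congr ?_ fun _ _ => rfl
  ext w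
  have := w.length_pos
  simp only [levelF, Finset.mem_filter, Finset.mem_univ, true_and]
  omega

end Finsets

namespace NBWalk

variable {V : Type*} [Fintype V] {G : SimpleGraph V} {v : V} {r : ℕ}

lemma adj_par_term (w : NBWalk G v r) (h : 1 < w.toList.length) :
    G.Adj w.par.term w.term := by
  have hc := w.chain
  rw [w.toList_eq_par_append h] at hc
  have := (List.isChain_append.1 hc).2.2
  exact this _ (by rw [List.getLast?_eq_getLast w.par.ne_nil]; rfl) _ rfl

lemma dropLast_eq_nil (w : NBWalk G v r) (h : w.toList.length = 1) :
    w.toList.dropLast = [] :=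
  List.eq_nil_of_length_eq_zero (by simp [h])

lemma getLast?_dropLast (w : NBWalk G v r) (h : 1 < w.toList.length) :
    w.toList.dropLast.getLast? = some w.par.term := by
  rw [← w.par_toList h, List.getLast?_eq_getLast w.par.ne_nil]
  rfl

lemma extF_eq_of_len_one (w : NBWalk G v r) (h : w.toList.length = 1) :
    w.extF = G.neighborFinset w.term := by
  ext x
  simp [extF, canExt, w.dropLast_eq_nil h]

lemma extF_eq_of_lt (w : NBWalk G v r) (h : 1 < w.toList.length) :
    w.extF = (G.neighborFinset w.term).erase w.par.term := by
  ext x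
  simp only [extF, canExt, Finset.mem_filter, Finset.mem_univ, true_and, Finset.mem_erase,
    SimpleGraph.mem_neighborFinset, w.getLast?_dropLast h, Option.mem_some_iff]
  constructor
  · rintro ⟨ha, hne⟩; exact ⟨hne _ rfl, ha⟩
  · rintro ⟨hne, ha⟩; exact ⟨ha, fun p hp => hp ▸ hne⟩

lemma card_extF_of_len_one (w : NBWalk G v r) (h : w.toList.length = 1) :
    w.extF.card = G.degree w.term := by
  rw [w.extF_eq_of_len_one h]
  exact G.card_neighborFinset_eq_degree w.term

lemma card_extF_of_lt (w : NBWalk G v r) (h : 1 < w.toList.length) :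
    w.extF.card = G.degree w.term - 1 := by
  rw [w.extF_eq_of_lt h, Finset.card_erase_of_mem
    (by rw [SimpleGraph.mem_neighborFinset]; exact (w.adj_par_term h).symm),
    G.card_neighborFinset_eq_degree]

lemma ext1_par_term (w : NBWalk G v r) (x : V) (hr : w.toList.length ≤ r) (hx : w.canExt x) :
    (w.ext1 x).par.term = w.term := by
  have h2 : 1 < (w.ext1 x).toList.length := by
    rw [w.ext1_length x hr hx]; have := w.length_pos; omega
  have h1 := (w.ext1 x).getLast?_dropLast h2
  have h3 := w.ext1_dropLast_getLast? x hr hx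
  exact (Option.some.inj (h1.symm.trans h3))

/-- The weight of a walk: product of `(deg u - 1)⁻¹` over interior vertices. -/
noncomputable def cw (w : NBWalk G v r) : ℝ :=
  ((w.toList.dropLast.drop 1).map (fun u => ((G.degree u : ℝ) - 1)⁻¹)).prod

lemma cw_pos (hdeg : ∀ u, 2 ≤ G.degree u) (w : NBWalk G v r) : 0 < w.cw := by
  apply List.prod_pos
  intro a ha
  obtain ⟨u, -, rfl⟩ := List.mem_map.1 ha
  have h2 : (2 : ℝ) ≤ (G.degree u : ℝ) := by exact_mod_cast hdeg u
  have h1 : (0 : ℝ) < (G.degree u : ℝ) - 1 := by linarith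
  exact inv_pos.2 h1

lemma cw_of_len_one (w : NBWalk G v r) (h : w.toList.length = 1) : w.cw = 1 := by
  simp [cw, w.dropLast_eq_nil h]

lemma cw_ext1_of_len_one (w : NBWalk G v r) (x : V) (hr : w.toList.length ≤ r)
    (hx : w.canExt x) (h : w.toList.length = 1) : (w.ext1 x).cw = 1 := by
  obtain ⟨a, ha⟩ := List.length_eq_one_iff.1 h
  simp [cw, w.ext1_toList x hr hx, ha]

lemma cw_ext1_of_lt (w : NBWalk G v r) (x : V) (hr : w.toList.length ≤ r)
    (hx : w.canExt x) (h : 1 < w.toList.length) :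
    (w.ext1 x).cw = w.cw * ((G.degree w.term : ℝ) - 1)⁻¹ := by
  have hdne : w.toList.dropLast ≠ [] := by
    intro hnil; have := congrArg List.length hnil; simp at this; omega
  rw [cw, w.ext1_toList x hr hx, List.dropLast_concat]
  conv_lhs => rw [← List.dropLast_concat_getLast w.ne_nil]
  rw [List.drop_append_of_le_length (by have := List.length_pos_iff.2 hdne; omega),
    List.map_append, List.prod_append]
  simp [cw, NBWalk.term]
  exact Or.inl (by congr)

end NBWalk

section WeightF

variable {V : Type*} [Fintype V] (G : SimpleGraph V) (v : V) (r : ℕ)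

/-- The weight used in the test vector. -/
noncomputable def wtw (w : NBWalk G v r) : ℝ :=
  if w.toList.length = 1 then (G.degree v : ℝ) else w.cw

/-- The test vector on the unraveled ball. -/
noncomputable def fV (w : NBWalk G v r) : ℝ :=
  Real.sin (w.toList.length * (π / (r + 2))) * Real.sqrt (wtw G v r w)

variable {G v r}

lemma wtw_pos (hdeg : ∀ u, 2 ≤ G.degree u) (w : NBWalk G v r) : 0 < wtw G v r w := by
  rw [wtw]
  split
  · have := hdeg v
    have : (2 : ℝ) ≤ (G.degree v : ℝ) := by exact_mod_cast this
    linarith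
  · exact NBWalk.cw_pos hdeg w

end WeightF

section Key

variable {V : Type*} [Fintype V] {G : SimpleGraph V} {r : ℕ}

lemma NBWalk.canExt_of_mem_extF {v : V} {w : NBWalk G v r} {x : V} (hx : x ∈ w.extF) :
    w.canExt x := by
  simpa [NBWalk.extF] using hx

lemma sum_nbhd_swap (F : V → V → ℝ) :
    ∑ a : V, ∑ b ∈ G.neighborFinset a, F a b
      = ∑ b : V, ∑ a ∈ G.neighborFinset b, F a b := by
  simp_rw [SimpleGraph.neighborFinset_eq_filter, Finset.sum_filter]
  rw [Finset.sum_comm]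
  refine Finset.sum_congr rfl fun b _ => Finset.sum_congr rfl fun a _ => ?_
  rw [SimpleGraph.adj_comm]

lemma sum_erase_nbhd (b : V) (g : V → ℝ) :
    ∑ a ∈ G.neighborFinset b, ∑ x ∈ (G.neighborFinset b).erase a, g x
      = ((G.degree b : ℝ) - 1) * ∑ x ∈ G.neighborFinset b, g x := by
  rw [Finset.sum_congr rfl (fun a ha => Finset.sum_erase_eq_sub ha)]
  rw [Finset.sum_sub_distrib, Finset.sum_const, G.card_neighborFinset_eq_degree,
    nsmul_eq_mul]
  ring

lemma nbRoot_term (v : V) : (nbRoot G v r).term = v := rfl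

lemma nbRoot_len (v : V) : (nbRoot G v r).toList.length = 1 := rfl

lemma key_sum (hdeg : ∀ u, 2 ≤ G.degree u) (k : ℕ) (hk1 : 1 ≤ k) (hkr : k ≤ r)
    (h : V → V → ℝ) :
    ∑ v : V, ∑ w ∈ levelF G v r k, w.cw * h w.par.term w.term
      = ∑ a : V, ∑ b ∈ G.neighborFinset a, h a b := by
  induction k generalizing h with
  | zero => omega
  | succ k ih =>
    rcases Nat.eq_zero_or_pos k with hk0 | hkpos
    · -- base case : k + 1 = 1
      subst hk0
      refine Finset.sum_congr rfl fun v _ => ?_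
      rw [sum_levelF_succ 0 hkr, levelF_zero, Finset.sum_singleton]
      have hroot1 : (nbRoot G v r).toList.length = 1 := rfl
      have hrootr : (nbRoot G v r).toList.length ≤ r := by omega
      rw [(nbRoot G v r).extF_eq_of_len_one hroot1, nbRoot_term]
      refine Finset.sum_congr rfl fun x hx => ?_
      have hce : (nbRoot G v r).canExt x := by
        apply NBWalk.canExt_of_mem_extF
        rw [(nbRoot G v r).extF_eq_of_len_one hroot1, nbRoot_term]
        exact hx
      rw [(nbRoot G v r).cw_ext1_of_len_one x hrootr hce hroot1,
        (nbRoot G v r).ext1_par_term x hrootr hce,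
        (nbRoot G v r).ext1_term x hrootr hce, nbRoot_term, one_mul]
    · -- inductive step
      set H : V → V → ℝ :=
        fun a b => ((G.degree b : ℝ) - 1)⁻¹ * ∑ x ∈ (G.neighborFinset b).erase a, h b x with hH
      have step1 : ∑ v : V, ∑ w ∈ levelF G v r (k + 1), w.cw * h w.par.term w.term
          = ∑ v : V, ∑ w ∈ levelF G v r k, w.cw * H w.par.term w.term := by
        refine Finset.sum_congr rfl fun v _ => ?_
        rw [sum_levelF_succ k (by omega)]
        refine Finset.sum_congr rfl fun w hw => ?_
        have hwl : w.toList.length = k + 1 := by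
          simpa [levelF] using hw
        have hlt : 1 < w.toList.length := by omega
        have hr' : w.toList.length ≤ r := by omega
        rw [w.extF_eq_of_lt hlt]
        have : ∀ x ∈ (G.neighborFinset w.term).erase w.par.term,
            (w.ext1 x).cw * h (w.ext1 x).par.term (w.ext1 x).term
              = (w.cw * ((G.degree w.term : ℝ) - 1)⁻¹) * h w.term x := by
          intro x hx
          have hce : w.canExt x := by
            apply NBWalk.canExt_of_mem_extF
            rw [w.extF_eq_of_lt hlt]; exact hx
          rw [w.cw_ext1_of_lt x hr' hce hlt, w.ext1_par_term x hr' hce, w.ext1_term x hr' hce]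
        rw [Finset.sum_congr rfl this, ← Finset.mul_sum, hH, mul_assoc]
      rw [step1, ih hkpos (by omega) H, sum_nbhd_swap H, hH]
      show _ = ∑ b : V, ∑ x ∈ G.neighborFinset b, h b x
      refine Finset.sum_congr rfl fun b _ => ?_
      simp only
      rw [← Finset.mul_sum, sum_erase_nbhd b (h b), ← mul_assoc, inv_mul_cancel₀ (by
        have h2 : (2 : ℝ) ≤ (G.degree b : ℝ) := by exact_mod_cast hdeg b
        intro hc; rw [sub_eq_zero] at hc; rw [hc] at h2; norm_num at h2), one_mul]

end Key

section Rayleigh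
open Matrix

lemma rayleigh_bound {n : Type*} [Fintype n] [DecidableEq n] [Nonempty n]
    {A : Matrix n n ℝ} (hA : A.IsHermitian) (f : n → ℝ) :
    f ⬝ᵥ (A *ᵥ f) ≤ (⨆ i, hA.eigenvalues i) * (f ⬝ᵥ f) := by
  classical
  set U : Matrix n n ℝ := (hA.eigenvectorUnitary : Matrix n n ℝ) with hU
  have hstar : star U = Uᵀ := by
    rw [Matrix.star_eq_conjTranspose, Matrix.conjTranspose_eq_transpose_of_trivial]
  have hUU : U * star U = 1 := (Matrix.mem_unitaryGroup_iff).1 hA.eigenvectorUnitary.2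
  set g : n → ℝ := f ᵥ* U with hg
  have hdiag : Matrix.diagonal (RCLike.ofReal ∘ hA.eigenvalues)
      = Matrix.diagonal hA.eigenvalues := rfl
  have hgf : star U *ᵥ f = g := by
    rw [hstar, hg, Matrix.mulVec_transpose]
  have hAf : A *ᵥ f = U *ᵥ ((Matrix.diagonal hA.eigenvalues) *ᵥ g) := by
    conv_lhs => rw [hA.spectral_theorem, Unitary.conjStarAlgAut_apply]
    rw [← Matrix.mulVec_mulVec, ← Matrix.mulVec_mulVec, hdiag, hU, hgf]
  have key : f ⬝ᵥ (A *ᵥ f) = ∑ i, hA.eigenvalues i * (g i * g i) := by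
    rw [hAf, Matrix.dotProduct_mulVec, ← hg, dotProduct]
    refine Finset.sum_congr rfl fun i _ => ?_
    rw [Matrix.mulVec_diagonal]
    ring
  have hff : f ⬝ᵥ f = ∑ i, g i * g i := by
    have h1 : g ⬝ᵥ g = f ⬝ᵥ f := by
      calc g ⬝ᵥ g = (f ᵥ* U) ⬝ᵥ g := by rw [← hg]
      _ = f ⬝ᵥ (U *ᵥ g) := (Matrix.dotProduct_mulVec f U g).symm
      _ = f ⬝ᵥ (U *ᵥ (star U *ᵥ f)) := by rw [hgf]
      _ = f ⬝ᵥ ((U * star U) *ᵥ f) := by rw [Matrix.mulVec_mulVec]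
      _ = f ⬝ᵥ f := by rw [hUU, Matrix.one_mulVec]
    rw [← h1, dotProduct]
  rw [key, hff, Finset.mul_sum]
  refine Finset.sum_le_sum fun i _ => ?_
  exact mul_le_mul_of_nonneg_right
    (le_ciSup (Set.Finite.bddAbove (Set.finite_range _)) i) (mul_self_nonneg _)

end Rayleigh

section Trig

lemma sin_sum_zero (m : ℕ) (hm : 2 ≤ m) :
    ∑ j ∈ Finset.range m, Real.sin (j * (2 * π / m)) = 0 := by
  set α : ℝ := 2 * π / m with hα
  set z : ℂ := Complex.exp (α * Complex.I) with hz
  have hmr : (0:ℝ) < m := by positivity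
  have hm0 : (m : ℝ) ≠ 0 := ne_of_gt hmr
  have hmc : (m : ℂ) ≠ 0 := by exact_mod_cast hm0
  have hπ : (0:ℝ) < π := Real.pi_pos
  have hαpos : 0 < α := by rw [hα]; positivity
  have hαle : α ≤ π := by
    rw [hα, div_le_iff₀ hmr]
    have : (2:ℝ) ≤ (m:ℝ) := by exact_mod_cast hm
    nlinarith
  have hz1 : z ≠ 1 := by
    intro h
    rw [hz, Complex.exp_eq_one_iff] at h
    obtain ⟨n, hn⟩ := h
    have hαn : (α : ℂ) = n * (2 * π) := by
      have := mul_right_cancel₀ Complex.I_ne_zero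
        (hn.trans (by ring_nf) : (α:ℂ) * Complex.I = (n * (2 * π)) * Complex.I)
      exact this
    have hre : α = (n:ℝ) * (2 * π) := by exact_mod_cast hαn
    rcases le_or_gt n 0 with hn0 | hn1
    · have : (n:ℝ) ≤ 0 := by exact_mod_cast hn0
      nlinarith
    · have : (1:ℝ) ≤ (n:ℝ) := by exact_mod_cast hn1
      nlinarith
  have hzm : z ^ m = 1 := by
    rw [hz, ← Complex.exp_nat_mul]
    have heq : (m : ℂ) * (↑α * Complex.I) = 2 * π * Complex.I := by
      rw [hα]
      push_cast
      rw [div_mul_eq_mul_div, mul_div_assoc']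
      exact mul_div_cancel_left₀ _ hmc
    rw [heq, Complex.exp_two_pi_mul_I]
  have hgeom : ∑ j ∈ Finset.range m, z ^ j = 0 := by
    rw [geom_sum_eq hz1, hzm]
    simp
  have him : ∀ j : ℕ, (z ^ j).im = Real.sin (j * α) := by
    intro j
    rw [hz, ← Complex.exp_nat_mul]
    have : (j : ℂ) * (↑α * Complex.I) = (((j : ℝ) * α : ℝ) : ℂ) * Complex.I := by
      push_cast; ring
    rw [this, Complex.exp_ofReal_mul_I_im]
  calc ∑ j ∈ Finset.range m, Real.sin (j * α)
      = (∑ j ∈ Finset.range m, z ^ j).im := by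
        rw [Complex.im_sum]
        exact (Finset.sum_congr rfl fun j _ => (him j).symm)
    _ = 0 := by rw [hgeom]; rfl

lemma trig_identity (r : ℕ) :
    ∑ k ∈ Finset.range (r + 1),
        Real.sin (((k:ℝ) + 1) * (π / (r + 2))) * Real.sin (((k:ℝ) + 2) * (π / (r + 2)))
      = Real.cos (π / (r + 2)) *
        ∑ k ∈ Finset.range (r + 1), Real.sin (((k:ℝ) + 1) * (π / (r + 2))) ^ 2 := by
  set θ : ℝ := π / (r + 2) with hθ
  have hsum0 : ∑ k ∈ Finset.range (r + 1), Real.sin (2 * (((k:ℝ) + 1) * θ)) = 0 := by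
    have h0 := sin_sum_zero (r + 2) (by omega)
    rw [Finset.sum_range_succ'] at h0
    simp only [Nat.cast_zero, zero_mul, Real.sin_zero, add_zero] at h0
    rw [← h0]
    refine Finset.sum_congr rfl fun k _ => ?_
    congr 1
    push_cast [hθ]
    ring
  calc ∑ k ∈ Finset.range (r + 1),
        Real.sin (((k:ℝ) + 1) * θ) * Real.sin (((k:ℝ) + 2) * θ)
      = ∑ k ∈ Finset.range (r + 1),
          (Real.cos θ * Real.sin (((k:ℝ) + 1) * θ) ^ 2
            + (Real.sin θ / 2) * Real.sin (2 * (((k:ℝ) + 1) * θ))) := by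
        refine Finset.sum_congr rfl fun k _ => ?_
        rw [show ((k:ℝ) + 2) * θ = ((k:ℝ) + 1) * θ + θ by ring, Real.sin_add,
          Real.sin_two_mul]
        ring
    _ = Real.cos θ * (∑ k ∈ Finset.range (r + 1), Real.sin (((k:ℝ) + 1) * θ) ^ 2)
          + (Real.sin θ / 2) * ∑ k ∈ Finset.range (r + 1), Real.sin (2 * (((k:ℝ) + 1) * θ)) := by
        rw [Finset.sum_add_distrib, Finset.mul_sum, Finset.mul_sum]
    _ = Real.cos θ * ∑ k ∈ Finset.range (r + 1), Real.sin (((k:ℝ) + 1) * θ) ^ 2 := by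
        rw [hsum0, mul_zero, add_zero]

end Trig

section PerV
open Matrix

variable {V : Type*} [Fintype V] {G : SimpleGraph V} {v : V} {r : ℕ}

lemma mem_levelF {w : NBWalk G v r} {k : ℕ} :
    w ∈ levelF G v r k ↔ w.toList.length = k + 1 := by
  simp [levelF]

/-- Summand of the edge-sum of the test vector. -/
noncomputable def eS (G : SimpleGraph V) (v : V) (r : ℕ) (w : NBWalk G v r) : ℝ :=
  if w.toList.length ≤ r then ∑ x ∈ w.extF, fV G v r w * fV G v r (w.ext1 x) else 0

private lemma ite_or_add {P Q : Prop} [Decidable P] [Decidable Q] (h : ¬(P ∧ Q)) (a : ℝ) :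
    (if P ∨ Q then a else 0) = (if P then a else 0) + (if Q then a else 0) := by
  by_cases hP : P <;> by_cases hQ : Q <;> simp [hP, hQ] <;> exact absurd ⟨hP, hQ⟩ h

lemma child_lengths {w w' : NBWalk G v r} (h : ∃ x, w'.toList = w.toList ++ [x]) :
    w'.toList.length = w.toList.length + 1 := by
  obtain ⟨x, hx⟩ := h
  simp [hx]

lemma quad_form :
    fV G v r ⬝ᵥ ((unravBall G v r).adjMatrix ℝ *ᵥ fV G v r)
      = 2 * ∑ w, eS G v r w := by
  have hadj : ∀ w w' : NBWalk G v r, (unravBall G v r).Adj w w'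
      ↔ ((∃ x, w'.toList = w.toList ++ [x]) ∨ (∃ x, w.toList = w'.toList ++ [x])) := by
    intro w w'
    rw [unravBall, SimpleGraph.fromRel_adj]
    constructor
    · rintro ⟨-, h⟩; exact h
    · intro h
      refine ⟨?_, h⟩
      intro heq
      rcases h with h | h <;>
        · have := child_lengths h
          rw [heq] at this
          omega
  have step1 : fV G v r ⬝ᵥ ((unravBall G v r).adjMatrix ℝ *ᵥ fV G v r)
      = ∑ w : NBWalk G v r, ∑ w' : NBWalk G v r,
          (if (∃ x, w'.toList = w.toList ++ [x]) then fV G v r w * fV G v r w' else 0)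
        + ∑ w : NBWalk G v r, ∑ w' : NBWalk G v r,
          (if (∃ x, w.toList = w'.toList ++ [x]) then fV G v r w * fV G v r w' else 0) := by
    rw [dotProduct, ← Finset.sum_add_distrib]
    refine Finset.sum_congr rfl fun w _ => ?_
    rw [Matrix.mulVec, dotProduct, Finset.mul_sum, ← Finset.sum_add_distrib]
    refine Finset.sum_congr rfl fun w' _ => ?_
    rw [SimpleGraph.adjMatrix_apply]
    by_cases hA : (unravBall G v r).Adj w w'
    · rw [if_pos hA, ← ite_or_add (fun hpq => by
        have h1 := child_lengths hpq.1
        have h2 := child_lengths hpq.2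
        omega) (fV G v r w * fV G v r w'), if_pos ((hadj w w').1 hA)]
      ring
    · rw [if_neg hA, if_neg (fun h => hA ((hadj w w').2 (Or.inl h))),
        if_neg (fun h => hA ((hadj w w').2 (Or.inr h)))]
      ring
  have step2 : ∑ w : NBWalk G v r, ∑ w' : NBWalk G v r,
      (if (∃ x, w.toList = w'.toList ++ [x]) then fV G v r w * fV G v r w' else 0)
      = ∑ w : NBWalk G v r, ∑ w' : NBWalk G v r,
      (if (∃ x, w'.toList = w.toList ++ [x]) then fV G v r w * fV G v r w' else 0) := by
    rw [Finset.sum_comm]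
    refine Finset.sum_congr rfl fun w _ => Finset.sum_congr rfl fun w' _ => ?_
    by_cases h : ∃ x, w'.toList = w.toList ++ [x] <;> simp [h, mul_comm]
  have step3 : ∑ w : NBWalk G v r, ∑ w' : NBWalk G v r,
      (if (∃ x, w'.toList = w.toList ++ [x]) then fV G v r w * fV G v r w' else 0)
      = ∑ w, eS G v r w := by
    refine Finset.sum_congr rfl fun w _ => ?_
    rw [← Finset.sum_filter]
    rcases le_or_gt w.toList.length r with hr' | hr'
    · rw [eS, if_pos hr', w.sum_children hr' (fun w' => fV G v r w * fV G v r w')]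
    · have hlen : w.toList.length = r + 1 := by have := w.length_le; omega
      rw [eS, if_neg (by omega), w.no_children hlen, Finset.sum_empty]
  rw [step1, step2, step3]
  ring

end PerV

section Levels

variable {V : Type*} [Fintype V] {G : SimpleGraph V} {v : V} {r : ℕ}

lemma nbRoot_wtw : wtw G v r (nbRoot G v r) = (G.degree v : ℝ) := by
  rw [wtw, if_pos (nbRoot_len v)]

lemma fV_nbRoot : fV G v r (nbRoot G v r)
    = Real.sin (π / (r + 2)) * Real.sqrt (G.degree v : ℝ) := by
  rw [fV, nbRoot_wtw, nbRoot_len]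
  norm_num

/-- The weighted edge-boundary sum at level `k`. -/
noncomputable def Bv (G : SimpleGraph V) (v : V) (r : ℕ) (k : ℕ) : ℝ :=
  if k = 0 then (G.degree v : ℝ) * Real.sqrt (G.degree v : ℝ)
  else ∑ w ∈ levelF G v r k, w.cw * Real.sqrt ((G.degree w.term : ℝ) - 1)

lemma eS_levelF (hdeg : ∀ u, 2 ≤ G.degree u) (k : ℕ) (hk : k + 1 ≤ r) :
    ∑ w ∈ levelF G v r k, eS G v r w
      = Real.sin (((k:ℝ) + 1) * (π / (r + 2))) * Real.sin (((k:ℝ) + 2) * (π / (r + 2)))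
        * Bv G v r k := by
  rcases Nat.eq_zero_or_pos k with rfl | hkpos
  · rw [levelF_zero, Finset.sum_singleton, Bv, if_pos rfl]
    have hroot1 : (nbRoot G v r).toList.length = 1 := rfl
    have hrootr : (nbRoot G v r).toList.length ≤ r := by rw [hroot1]; omega
    rw [eS, if_pos hrootr]
    have hterm : ∀ x ∈ (nbRoot G v r).extF,
        fV G v r (nbRoot G v r) * fV G v r ((nbRoot G v r).ext1 x)
          = (Real.sin (π / (r + 2)) * Real.sqrt (G.degree v : ℝ))
            * Real.sin ((2:ℝ) * (π / (r + 2))) := by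
      intro x hx
      have hce := NBWalk.canExt_of_mem_extF hx
      rw [fV_nbRoot]
      congr 1
      rw [fV, wtw, (nbRoot G v r).ext1_length x hrootr hce, hroot1]
      rw [if_neg (by omega), (nbRoot G v r).cw_ext1_of_len_one x hrootr hce hroot1]
      norm_num
    rw [Finset.sum_congr rfl hterm, Finset.sum_const,
      (nbRoot G v r).card_extF_of_len_one hroot1, nbRoot_term, nsmul_eq_mul]
    push_cast
    ring
  · rw [Bv, if_neg (by omega), Finset.mul_sum]
    refine Finset.sum_congr rfl fun w hw => ?_
    have hwl : w.toList.length = k + 1 := mem_levelF.1 hw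
    have hlt : 1 < w.toList.length := by omega
    have hr' : w.toList.length ≤ r := by omega
    rw [eS, if_pos hr']
    have hd2 : (2:ℝ) ≤ (G.degree w.term : ℝ) := by exact_mod_cast hdeg w.term
    have hd1 : (0:ℝ) < (G.degree w.term : ℝ) - 1 := by linarith
    have hterm : ∀ x ∈ w.extF,
        fV G v r w * fV G v r (w.ext1 x)
          = Real.sin (((k:ℝ) + 1) * (π / (r + 2))) * Real.sin (((k:ℝ) + 2) * (π / (r + 2)))
            * (w.cw * Real.sqrt (((G.degree w.term : ℝ) - 1)⁻¹)) := by
      intro x hx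
      have hce := NBWalk.canExt_of_mem_extF hx
      rw [fV, fV, wtw, wtw, w.ext1_length x hr' hce, hwl,
        if_neg (by omega), if_neg (by omega),
        w.cw_ext1_of_lt x hr' hce hlt,
        Real.sqrt_mul (NBWalk.cw_pos hdeg w).le,
        show (((k:ℕ) + 1 + 1 : ℕ) : ℝ) * (π / (r + 2)) = ((k:ℝ) + 2) * (π / (r + 2)) by
          push_cast; ring,
        show (((k:ℕ) + 1 : ℕ) : ℝ) * (π / (r + 2)) = ((k:ℝ) + 1) * (π / (r + 2)) by
          push_cast; ring]
      rw [show ∀ a b c d : ℝ, (a * b) * (c * (b * d)) = a * c * (b * b * d) from by intros; ring,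
        Real.mul_self_sqrt (NBWalk.cw_pos hdeg w).le]
    rw [Finset.sum_congr rfl hterm, Finset.sum_const, w.card_extF_of_lt hlt, nsmul_eq_mul]
    have hcast : ((G.degree w.term - 1 : ℕ) : ℝ) = (G.degree w.term : ℝ) - 1 := by
      have := hdeg w.term
      push_cast [Nat.cast_sub (by omega : 1 ≤ G.degree w.term)]
      ring
    rw [hcast, Real.sqrt_inv]
    rw [show ((G.degree w.term : ℝ) - 1) * (Real.sin (((k:ℝ) + 1) * (π / (r + 2)))
          * Real.sin (((k:ℝ) + 2) * (π / (r + 2)))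
          * (w.cw * (Real.sqrt ((G.degree w.term : ℝ) - 1))⁻¹))
        = Real.sin (((k:ℝ) + 1) * (π / (r + 2))) * Real.sin (((k:ℝ) + 2) * (π / (r + 2)))
          * (w.cw * (((G.degree w.term : ℝ) - 1) / Real.sqrt ((G.degree w.term : ℝ) - 1)))
        from by ring, Real.div_sqrt]

lemma eS_levelF_top (k : ℕ) (hk : r ≤ k) :
    ∑ w ∈ levelF G v r k, eS G v r w = 0 := by
  refine Finset.sum_eq_zero fun w hw => ?_
  have hwl : w.toList.length = k + 1 := mem_levelF.1 hw
  rw [eS, if_neg (by omega)]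

lemma fVsq_levelF (hdeg : ∀ u, 2 ≤ G.degree u) (k : ℕ) :
    ∑ w ∈ levelF G v r k, fV G v r w * fV G v r w
      = Real.sin (((k:ℝ) + 1) * (π / (r + 2))) ^ 2 * ∑ w ∈ levelF G v r k, wtw G v r w := by
  rw [Finset.mul_sum]
  refine Finset.sum_congr rfl fun w hw => ?_
  have hwl : w.toList.length = k + 1 := mem_levelF.1 hw
  rw [fV, hwl,
    show (((k:ℕ) + 1 : ℕ) : ℝ) * (π / (r + 2)) = ((k:ℝ) + 1) * (π / (r + 2)) by
      push_cast; ring]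
  rw [show ∀ a b : ℝ, (a * b) * (a * b) = a ^ 2 * (b * b) from by intros; ring,
    Real.mul_self_sqrt (wtw_pos hdeg w).le]

lemma wtw_levelF_zero : ∑ w ∈ levelF G v r 0, wtw G v r w = (G.degree v : ℝ) := by
  rw [levelF_zero, Finset.sum_singleton, nbRoot_wtw]

lemma wtw_levelF_pos (k : ℕ) (hk : 1 ≤ k) :
    ∑ w ∈ levelF G v r k, wtw G v r w = ∑ w ∈ levelF G v r k, w.cw := by
  refine Finset.sum_congr rfl fun w hw => ?_
  have hwl : w.toList.length = k + 1 := mem_levelF.1 hw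
  rw [wtw, if_neg (by omega)]

end Levels

section Total

variable {V : Type*} [Fintype V] [Nonempty V] {G : SimpleGraph V} {r : ℕ}

lemma total_wtw (hdeg : ∀ u, 2 ≤ G.degree u) (k : ℕ) (hk : k ≤ r) :
    ∑ v : V, ∑ w ∈ levelF G v r k, wtw G v r w = 2 * (G.edgeFinset.card : ℝ) := by
  have hE : ∑ u : V, (G.degree u : ℝ) = 2 * (G.edgeFinset.card : ℝ) := by
    rw [← Nat.cast_sum]
    exact_mod_cast congrArg (Nat.cast : ℕ → ℝ) (SimpleGraph.sum_degrees_eq_twice_card_edges G)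
  rcases Nat.eq_zero_or_pos k with rfl | hkpos
  · simp only [wtw_levelF_zero]
    exact hE
  · have h1 : ∀ v : V, ∑ w ∈ levelF G v r k, wtw G v r w
        = ∑ w ∈ levelF G v r k, w.cw * (fun (_ _ : V) => (1:ℝ)) w.par.term w.term := by
      intro v
      rw [wtw_levelF_pos k hkpos]
      simp
    rw [Finset.sum_congr rfl fun v _ => h1 v]
    refine (key_sum hdeg k hkpos hk (fun _ _ => (1:ℝ))).trans ?_
    rw [← hE]
    refine Finset.sum_congr rfl fun a _ => ?_
    rw [Finset.sum_const, nsmul_eq_mul, mul_one, G.card_neighborFinset_eq_degree]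

lemma total_B (hdeg : ∀ u, 2 ≤ G.degree u) (k : ℕ) (hk : k + 1 ≤ r) :
    ∑ u : V, (G.degree u : ℝ) * Real.sqrt ((G.degree u : ℝ) - 1) ≤ ∑ v : V, Bv G v r k := by
  rcases Nat.eq_zero_or_pos k with rfl | hkpos
  · simp only [Bv, if_pos rfl]
    refine Finset.sum_le_sum fun u _ => ?_
    have h0 : (0:ℝ) ≤ (G.degree u : ℝ) := by positivity
    exact mul_le_mul_of_nonneg_left (Real.sqrt_le_sqrt (by linarith)) h0
  · have h1 : ∀ v : V, Bv G v r k
        = ∑ w ∈ levelF G v r k, w.cw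
            * (fun (_ b : V) => Real.sqrt ((G.degree b : ℝ) - 1)) w.par.term w.term := by
      intro v
      rw [Bv, if_neg (by omega)]
    rw [Finset.sum_congr rfl fun v _ => h1 v]
    refine le_of_eq ?_
    refine Eq.trans ?_ (key_sum hdeg k hkpos (Nat.le_of_succ_le hk) (fun _ b => Real.sqrt ((G.degree b : ℝ) - 1))).symm
    rw [sum_nbhd_swap (fun _ b => Real.sqrt ((G.degree b : ℝ) - 1))]
    refine Finset.sum_congr rfl fun b _ => ?_
    rw [Finset.sum_const, nsmul_eq_mul, G.card_neighborFinset_eq_degree]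

end Total

/-- For any finite graph of minimum degree `≥ 2` and any `r`, some unraveled ball of
radius `r` has spectral radius at least
`(1/|E|) ∑ d(u) √(d(u)-1) · cos (π / (r + 2))`. -/
theorem exists_unravBall_lam1_ge {V : Type*} [Fintype V] [Nonempty V] (G : SimpleGraph V)
    (hdeg : ∀ u, 2 ≤ G.degree u) (r : ℕ) :
    ∃ v : V,
      (1 / (G.edgeFinset.card : ℝ)) *
          (∑ u, (G.degree u : ℝ) * Real.sqrt ((G.degree u : ℝ) - 1)) *
          Real.cos (π / (r + 2))
        ≤ lam1 (unravBall G v r) := by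
  classical
  set θ : ℝ := π / (r + 2) with hθ
  set T : ℝ := ∑ u, (G.degree u : ℝ) * Real.sqrt ((G.degree u : ℝ) - 1) with hT
  set E : ℝ := (G.edgeFinset.card : ℝ) with hE
  set β : ℝ := 1 / E * T * Real.cos θ with hβ
  have hr2 : (0:ℝ) < (r:ℝ) + 2 := by positivity
  have h2E : ∑ u : V, (G.degree u : ℝ) = 2 * E := by
    have h0 := total_wtw (G := G) (r := r) hdeg 0 (Nat.zero_le r)
    rw [Finset.sum_congr rfl (fun v _ => wtw_levelF_zero)] at h0
    rw [hE]
    exact h0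
  have hEpos : 0 < E := by
    have hpos : 0 < ∑ u : V, (G.degree u : ℝ) := by
      refine Finset.sum_pos (fun u _ => ?_) Finset.univ_nonempty
      have h2 : (2:ℝ) ≤ (G.degree u : ℝ) := by exact_mod_cast hdeg u
      linarith
    linarith
  have hθpos : 0 < θ := by rw [hθ]; positivity
  have hθlt : θ < π := by
    rw [hθ, div_lt_iff₀ hr2]
    nlinarith [Real.pi_pos]
  have hsinθ : 0 < Real.sin θ := Real.sin_pos_of_pos_of_lt_pi hθpos hθlt
  have hsin : ∀ x : ℝ, 0 ≤ x → x ≤ (r:ℝ) + 2 → 0 ≤ Real.sin (x * θ) := by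
    intro x hx0 hx
    apply Real.sin_nonneg_of_nonneg_of_le_pi (by positivity)
    rw [hθ]
    calc x * (π / ((r:ℝ) + 2)) ≤ ((r:ℝ) + 2) * (π / ((r:ℝ) + 2)) :=
          mul_le_mul_of_nonneg_right hx (by positivity)
      _ = π := by field_simp
  set P : ℝ := ∑ k ∈ Finset.range (r + 1), Real.sin (((k:ℝ) + 1) * θ) ^ 2 with hP
  have htrig : ∑ k ∈ Finset.range (r + 1),
      Real.sin (((k:ℝ) + 1) * θ) * Real.sin (((k:ℝ) + 2) * θ) = Real.cos θ * P :=
    trig_identity r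
  have hQ : ∑ k ∈ Finset.range r,
      Real.sin (((k:ℝ) + 1) * θ) * Real.sin (((k:ℝ) + 2) * θ) = Real.cos θ * P := by
    rw [← htrig, Finset.sum_range_succ]
    have hz : Real.sin (((r:ℝ) + 2) * θ) = 0 := by
      rw [hθ, show ((r:ℝ) + 2) * (π / ((r:ℝ) + 2)) = π by field_simp, Real.sin_pi]
    rw [hz, mul_zero, add_zero]
  have hDtot : ∑ v : V, (∑ w : NBWalk G v r, fV G v r w * fV G v r w) = 2 * E * P := by
    have hDv : ∀ v : V, (∑ w : NBWalk G v r, fV G v r w * fV G v r w)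
        = ∑ k ∈ Finset.range (r + 1),
            Real.sin (((k:ℝ) + 1) * θ) ^ 2 * ∑ w ∈ levelF G v r k, wtw G v r w := by
      intro v
      rw [sum_univ_levelF]
      exact Finset.sum_congr rfl fun k _ => fVsq_levelF hdeg k
    rw [Finset.sum_congr rfl fun v _ => hDv v, Finset.sum_comm, hP, Finset.mul_sum]
    refine Finset.sum_congr rfl fun k hk => ?_
    rw [← Finset.mul_sum, total_wtw hdeg k (by have := Finset.mem_range.1 hk; omega)]
    ring
  have hStot : 2 * (Real.cos θ * P) * T ≤ ∑ v : V, 2 * ∑ w : NBWalk G v r, eS G v r w := by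
    have hSv : ∀ v : V, (∑ w : NBWalk G v r, eS G v r w)
        = ∑ k ∈ Finset.range r,
            Real.sin (((k:ℝ) + 1) * θ) * Real.sin (((k:ℝ) + 2) * θ) * Bv G v r k := by
      intro v
      rw [sum_univ_levelF, Finset.sum_range_succ, eS_levelF_top r le_rfl, add_zero]
      exact Finset.sum_congr rfl fun k hk => eS_levelF hdeg k (Finset.mem_range.1 hk)
    have hR : ∑ v : V, 2 * ∑ w : NBWalk G v r, eS G v r w
        = 2 * ∑ k ∈ Finset.range r,
            Real.sin (((k:ℝ) + 1) * θ) * Real.sin (((k:ℝ) + 2) * θ) * ∑ v : V, Bv G v r k := by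
      rw [← Finset.mul_sum, Finset.sum_congr rfl fun v _ => hSv v, Finset.sum_comm]
      congr 1
      refine Finset.sum_congr rfl fun k _ => ?_
      rw [Finset.mul_sum]
    rw [hR]
    have hQ' : (Real.cos θ * P) * T = ∑ k ∈ Finset.range r,
        Real.sin (((k:ℝ) + 1) * θ) * Real.sin (((k:ℝ) + 2) * θ) * T := by
      rw [← hQ, Finset.sum_mul]
    have hle : ∑ k ∈ Finset.range r,
          Real.sin (((k:ℝ) + 1) * θ) * Real.sin (((k:ℝ) + 2) * θ) * T
        ≤ ∑ k ∈ Finset.range r,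
            Real.sin (((k:ℝ) + 1) * θ) * Real.sin (((k:ℝ) + 2) * θ) * ∑ v : V, Bv G v r k := by
      refine Finset.sum_le_sum fun k hk => ?_
      have hkr := Finset.mem_range.1 hk
      have hss : 0 ≤ Real.sin (((k:ℝ) + 1) * θ) * Real.sin (((k:ℝ) + 2) * θ) := by
        have hkr' : (k:ℝ) ≤ (r:ℝ) := by exact_mod_cast Nat.le_of_lt hkr
        have h1 := hsin ((k:ℝ) + 1) (by positivity) (by linarith)
        have h2 := hsin ((k:ℝ) + 2) (by positivity) (by linarith)
        exact mul_nonneg h1 h2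
      exact mul_le_mul_of_nonneg_left (total_B hdeg k hkr) hss
    calc 2 * (Real.cos θ * P) * T = 2 * ((Real.cos θ * P) * T) := by ring
      _ = 2 * ∑ k ∈ Finset.range r,
            Real.sin (((k:ℝ) + 1) * θ) * Real.sin (((k:ℝ) + 2) * θ) * T := by rw [hQ']
      _ ≤ _ := by linarith
  have hRay : ∀ v : V, 2 * ∑ w : NBWalk G v r, eS G v r w
      ≤ lam1 (unravBall G v r) * ∑ w : NBWalk G v r, fV G v r w * fV G v r w := by
    intro v
    haveI : Nonempty (NBWalk G v r) := ⟨nbRoot G v r⟩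
    have hA : ((unravBall G v r).adjMatrix ℝ).IsHermitian := by
      rw [Matrix.IsHermitian, Matrix.conjTranspose_eq_transpose_of_trivial]
      exact SimpleGraph.isSymm_adjMatrix _
    have h := rayleigh_bound hA (fV G v r)
    rw [quad_form] at h
    exact h
  have hDpos : ∀ v : V, 0 < ∑ w : NBWalk G v r, fV G v r w * fV G v r w := by
    intro v
    refine Finset.sum_pos' (fun w _ => mul_self_nonneg _)
      ⟨nbRoot G v r, Finset.mem_univ _, ?_⟩
    rw [fV_nbRoot]
    have hd : (0:ℝ) < (G.degree v : ℝ) := by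
      have h2 : (2:ℝ) ≤ (G.degree v : ℝ) := by exact_mod_cast hdeg v
      linarith
    have hsq := Real.sqrt_pos.2 hd
    have := mul_pos hsinθ hsq
    exact mul_pos this this
  have hsumtot : ∑ v : V, β * (∑ w : NBWalk G v r, fV G v r w * fV G v r w)
      ≤ ∑ v : V, 2 * ∑ w : NBWalk G v r, eS G v r w := by
    rw [← Finset.mul_sum, hDtot]
    have hcollapse : β * (2 * E * P) = 2 * (Real.cos θ * P) * T := by
      rw [hβ]
      field_simp
    rw [hcollapse]
    exact hStot
  have hex : ∃ v : V, β * (∑ w : NBWalk G v r, fV G v r w * fV G v r w)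
      ≤ 2 * ∑ w : NBWalk G v r, eS G v r w := by
    by_contra hc
    push_neg at hc
    exact absurd hsumtot (not_le.2
      (Finset.sum_lt_sum_of_nonempty Finset.univ_nonempty fun v _ => hc v))
  obtain ⟨v, hv⟩ := hex
  refine ⟨v, ?_⟩
  have hchain := hv.trans (hRay v)
  exact (mul_le_mul_iff_of_pos_right (hDpos v)).1 hchain
end
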